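/- Let α ∈ Δ^{K-1} maximize Σ_{i=1}^K exp(-τ_i/σ²)·d_i, where τ_i = (2^R-1)/(P(α_i - (2^R-1)β_i)) if α_i - (2^R-1)β_i > 0 and τ_i = +∞ otherwise. Then τ_i = +∞ if and only if α_i = 0. -/
import Mathlib


open Finset

/-- Residual power β_i = Σ_{j>i} α_j. -/
noncomputable def resid {K : ℕ} (α : Fin K → ℝ) (i : Fin K) : ℝ :=
  ∑ j ∈ Finset.Ioi i, α j

/-- Effective power margin x_i = α_i - (2^R - 1) β_i. -/
noncomputable def margin {K : ℕ} (R : ℝ) (α : Fin K → ℝ) (i : Fin K) : ℝ :=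
  α i - ((2:ℝ) ^ R - 1) * resid α i

/-- Asymptotic PDS objective Σ_i exp(-τ_i/σ²) d_i, with exp(-∞) := 0. -/
noncomputable def pdsObj {K : ℕ} (R P σ2 : ℝ) (d : Fin K → ℝ) (α : Fin K → ℝ) : ℝ :=
  ∑ i : Fin K,
    (if 0 < margin R α i then
        Real.exp (-(((2:ℝ) ^ R - 1) / (P * margin R α i)) / σ2)
      else 0) * d i

/-- The standard simplex. -/
noncomputable def simplex (K : ℕ) : Set (Fin K → ℝ) :=
  {α | (∀ i, 0 ≤ α i) ∧ ∑ i, α i = 1}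

lemma f_mono {c P σ2 x y : ℝ} (hc : 0 < c) (hP : 0 < P) (hσ : 0 < σ2) (hxy : x ≤ y) :
    (if 0 < x then Real.exp (-(c / (P * x)) / σ2) else 0)
      ≤ (if 0 < y then Real.exp (-(c / (P * y)) / σ2) else 0) := by
  by_cases hx : 0 < x
  · have hy : 0 < y := lt_of_lt_of_le hx hxy
    rw [if_pos hx, if_pos hy]
    apply Real.exp_le_exp.mpr
    have h1 : c / (P * y) ≤ c / (P * x) := by
      gcongr
    have h2 : -(c / (P * x)) ≤ -(c / (P * y)) := by linarith
    exact div_le_div_of_nonneg_right h2 hσ.le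
  · rw [if_neg hx]
    split_ifs
    · exact (Real.exp_pos _).le
    · exact le_refl 0

lemma f_strict {c P σ2 x y : ℝ} (hc : 0 < c) (hP : 0 < P) (hσ : 0 < σ2) (hxy : x < y)
    (hy : 0 < y) :
    (if 0 < x then Real.exp (-(c / (P * x)) / σ2) else 0)
      < (if 0 < y then Real.exp (-(c / (P * y)) / σ2) else 0) := by
  rw [if_pos hy]
  by_cases hx : 0 < x
  · rw [if_pos hx]
    apply Real.exp_lt_exp.mpr
    have h1 : c / (P * y) < c / (P * x) := by
      apply div_lt_div_of_pos_left hc (by positivity)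
      exact mul_lt_mul_of_pos_left hxy hP
    have h2 : -(c / (P * x)) < -(c / (P * y)) := by linarith
    exact (div_lt_div_iff_of_pos_right hσ).mpr h2
  · rw [if_neg hx]
    exact Real.exp_pos _


lemma margin_shift {K : ℕ} (R : ℝ) (α : Fin K → ℝ) (i j m : Fin K) :
    margin R (fun l => α l + (if l = j then α i else 0) - (if l = i then α i else 0)) m
      = margin R α m + ((if m = j then α i else 0) - (if m = i then α i else 0))
        - ((2:ℝ) ^ R - 1) * ((if m < j then α i else 0) - (if m < i then α i else 0)) := by
  unfold margin resid
  rw [Finset.sum_sub_distrib, Finset.sum_add_distrib, Finset.sum_ite_eq' (Finset.Ioi m) j,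
    Finset.sum_ite_eq' (Finset.Ioi m) i]
  simp only [Finset.mem_Ioi]
  ring

lemma shift_mem_simplex {K : ℕ} {α : Fin K → ℝ} (hα : α ∈ simplex K) {i j : Fin K}
    (hij : j ≠ i) (hi : 0 ≤ α i) :
    (fun l => α l + (if l = j then α i else 0) - (if l = i then α i else 0)) ∈ simplex K := by
  obtain ⟨hnn, hsum⟩ := hα
  constructor
  · intro l
    dsimp only
    split_ifs with h1 h2 h2
    · exact absurd (h1 ▸ h2 ▸ rfl : j = i) hij
    · linarith [hnn l, hi]
    · subst h2; linarith
    · linarith [hnn l]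
  · rw [Finset.sum_sub_distrib, Finset.sum_add_distrib,
      Finset.sum_ite_eq' Finset.univ j, Finset.sum_ite_eq' Finset.univ i]
    simp [hsum]

lemma pds_improve {K : ℕ} {R P σ2 : ℝ} (hc : 0 < (2:ℝ) ^ R - 1) (hP : 0 < P) (hσ : 0 < σ2)
    {d : Fin K → ℝ} (hdpos : ∀ i, 0 < d i) {α α' : Fin K → ℝ}
    (hcond : ∀ m, ¬ 0 < margin R α m ∨ margin R α m ≤ margin R α' m)
    (j : Fin K) (hjlt : margin R α j < margin R α' j) (hjpos : 0 < margin R α' j) :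
    pdsObj R P σ2 d α < pdsObj R P σ2 d α' := by
  unfold pdsObj
  apply Finset.sum_lt_sum
  · intro m _
    rcases hcond m with h | h
    · rw [if_neg h, zero_mul]
      apply mul_nonneg _ (hdpos m).le
      split_ifs
      · exact (Real.exp_pos _).le
      · exact le_refl 0
    · exact mul_le_mul_of_nonneg_right (f_mono hc hP hσ h) (hdpos m).le
  · exact ⟨j, Finset.mem_univ j,
      mul_lt_mul_of_pos_right (f_strict hc hP hσ hjlt hjpos) (hdpos j)⟩

/-- At any maximizer of the PDS objective, τ_i = +∞ (i.e. the margin is not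
positive) if and only if α_i = 0. -/
theorem tau_infinite_iff_alpha_zero (K : ℕ) (hK : 2 ≤ K) (R P σ2 : ℝ)
    (hR : 0 < R) (hP : 0 < P) (hσ : 0 < σ2)
    (d : Fin K → ℝ) (hd : StrictAnti d) (hdpos : ∀ i, 0 < d i)
    (α : Fin K → ℝ) (hα : α ∈ simplex K)
    (hmax : ∀ α' ∈ simplex K, pdsObj R P σ2 d α' ≤ pdsObj R P σ2 d α) :
    ∀ i : Fin K, ¬ 0 < margin R α i ↔ α i = 0 := by
  obtain ⟨hnn, hsum⟩ := hα
  have hc : (0:ℝ) < (2:ℝ) ^ R - 1 := by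
    have h2 : (1:ℝ) < (2:ℝ) ^ R :=
      (Real.one_lt_rpow_iff_of_pos (by norm_num)).mpr (Or.inl ⟨by norm_num, hR⟩)
    linarith
  intro i
  constructor
  · -- hard direction: no positive margin → α i = 0
    intro hm
    by_contra hne
    have hi : 0 < α i := lt_of_le_of_ne (hnn i) (Ne.symm hne)
    by_cases hC : ∃ m, 0 < margin R α m
    · -- some index has positive margin
      by_cases hA : ∃ j, j < i ∧ 0 < margin R α j
      · -- Case A: a positive margin below i; move α i down to it
        obtain ⟨j, hji, hjpos0⟩ := hA
        have hij : j ≠ i := ne_of_lt hji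
        set α' : Fin K → ℝ :=
          fun l => α l + (if l = j then α i else 0) - (if l = i then α i else 0) with hα'
        have hmem : α' ∈ simplex K := shift_mem_simplex ⟨hnn, hsum⟩ hij (hnn i)
        have hjlt : margin R α j < margin R α' j := by
          rw [hα', margin_shift, if_pos rfl, if_neg hij, if_neg (lt_irrefl j), if_pos hji]
          nlinarith [mul_pos hc hi]
        have hjpos : 0 < margin R α' j := by
          rw [hα', margin_shift, if_pos rfl, if_neg hij, if_neg (lt_irrefl j), if_pos hji]
          nlinarith [mul_pos hc hi]
        have hcond : ∀ m, ¬ 0 < margin R α m ∨ margin R α m ≤ margin R α' m := by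
          intro m
          by_cases hmi : m = i
          · subst hmi; exact Or.inl hm
          · right
            rw [hα', margin_shift]
            split_ifs <;> first | omega | nlinarith [mul_pos hc hi]
        have h1 := pds_improve hc hP hσ hdpos hcond j hjlt hjpos
        have h2 := hmax α' hmem
        linarith
      · -- Case B: minimal positive-margin index is above i
        push_neg at hA
        set S : Finset (Fin K) := Finset.univ.filter (fun m => 0 < margin R α m) with hS
        have hSne : S.Nonempty := by
          obtain ⟨m, hm'⟩ := hC
          exact ⟨m, by simp [hS, hm']⟩
        set j : Fin K := S.min' hSne with hj
        have hjpos0 : 0 < margin R α j := by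
          have := S.min'_mem hSne
          simp [hS] at this
          exact this
        have hjmin : ∀ m, 0 < margin R α m → j ≤ m := by
          intro m hm'
          exact S.min'_le m (by simp [hS, hm'])
        have hij2 : i < j := by
          rcases lt_trichotomy j i with h | h | h
          · exact absurd hjpos0 (not_lt.mpr (hA j h))
          · exact absurd (h ▸ hjpos0) hm
          · exact h
        have hij : j ≠ i := (ne_of_lt hij2).symm
        set α' : Fin K → ℝ :=
          fun l => α l + (if l = j then α i else 0) - (if l = i then α i else 0) with hα'
        have hmem : α' ∈ simplex K := shift_mem_simplex ⟨hnn, hsum⟩ hij (hnn i)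
        have hjlt : margin R α j < margin R α' j := by
          rw [hα', margin_shift, if_pos rfl, if_neg hij, if_neg (lt_irrefl j),
            if_neg (by omega : ¬ j < i)]
          linarith
        have hjpos : 0 < margin R α' j := by
          rw [hα', margin_shift, if_pos rfl, if_neg hij, if_neg (lt_irrefl j),
            if_neg (by omega : ¬ j < i)]
          linarith
        have hcond : ∀ m, ¬ 0 < margin R α m ∨ margin R α m ≤ margin R α' m := by
          intro m
          by_cases h0 : 0 < margin R α m
          · right
            have hjm : j ≤ m := hjmin m h0
            rw [hα', margin_shift]
            split_ifs <;> first | omega | nlinarith [mul_pos hc hi]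
          · exact Or.inl h0
        have h1 := pds_improve hc hP hσ hdpos hcond j hjlt hjpos
        have h2 := hmax α' hmem
        linarith
    · -- Case C: no positive margin anywhere; compare with point mass at i
      push_neg at hC
      have hz : pdsObj R P σ2 d α = 0 := by
        unfold pdsObj
        apply Finset.sum_eq_zero
        intro m _
        rw [if_neg (not_lt.mpr (hC m)), zero_mul]
      set α' : Fin K → ℝ := fun l => if l = i then (1:ℝ) else 0 with hα'
      have hmem : α' ∈ simplex K := by
        constructor
        · intro l; simp only [hα']; split_ifs <;> norm_num
        · simp [hα']
      have hmargin : margin R α' i = 1 := by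
        unfold margin resid
        rw [Finset.sum_ite_eq' (Finset.Ioi i) i]
        simp [hα']
      have hpos : 0 < pdsObj R P σ2 d α' := by
        unfold pdsObj
        apply Finset.sum_pos'
        · intro m _
          apply mul_nonneg _ (hdpos m).le
          split_ifs
          · exact (Real.exp_pos _).le
          · exact le_refl 0
        · refine ⟨i, Finset.mem_univ i, ?_⟩
          rw [if_pos (by rw [hmargin]; norm_num)]
          exact mul_pos (Real.exp_pos _) (hdpos i)
      have h2 := hmax α' hmem
      linarith
  · -- easy direction: α i = 0 → margin ≤ 0
    intro h0 hpos
    have hres : 0 ≤ resid α i := Finset.sum_nonneg fun l _ => hnn l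
    unfold margin at hpos
    nlinarith
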